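/- (Keisler under GCH; Kunen in ZFC) For every infinite cardinal λ there exists an ultrafilter D on a set I with |I| = λ which is both regular and good. -/

import Mathlib

open Classical
open Filter Set Cardinal

universe u

set_option linter.unusedSectionVars false
set_option linter.deprecated false





namespace KunenGood

variable {Λ : Type u} [Infinite Λ]

/-- Index set: pairs `(s, e)` with `s` a finite subset of `Λ` and `e` a function from
subsets of `s` to finite subsets of `Λ`. -/
abbrev Idx (Λ : Type u) : Type u := Σ s : Finset Λ, (Finset {x : Λ // x ∈ s} → Finset Λ)

/-- The independent family of functions, indexed by subsets of `Λ`. -/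
noncomputable def fn (A : Set Λ) (i : Idx Λ) : Finset Λ :=
  i.2 (i.1.attach.filter fun x => (x : Λ) ∈ A)

/-- Regularizing sets. -/
def reg (a : Λ) : Set (Idx Λ) := {i | a ∈ i.1}

variable (Λ) in
/-- The base (regularizing) filter. -/
noncomputable def base : Filter (Idx Λ) := Filter.generate (Set.range (reg (Λ := Λ)))

lemma reg_mem_base (a : Λ) : reg a ∈ base Λ :=
  mem_generate_iff.2 ⟨{reg a}, by simp, finite_singleton _, by simp⟩

/-- Independence of the subfamily indexed by `G` modulo the filter `F`. -/
def Indep (G : Set (Set Λ)) (F : Filter (Idx Λ)) : Prop :=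
  ∀ (T : Finset (Set Λ)) (w : Set Λ → Finset Λ) (S : Set (Idx Λ)),
    ↑T ⊆ G → S ∈ F → ∃ i, i ∈ S ∧ ∀ A ∈ T, fn A i = w A

/-- A point separating two distinct sets. -/
noncomputable def sepPt (A B : Set Λ) : Λ :=
  if h : ∃ x, ¬(x ∈ A ↔ x ∈ B) then h.choose else Classical.arbitrary Λ

lemma sepPt_spec {A B : Set Λ} (h : A ≠ B) : ¬(sepPt A B ∈ A ↔ sepPt A B ∈ B) := by
  have : ∃ x, ¬(x ∈ A ↔ x ∈ B) := by
    by_contra hc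
    push_neg at hc
    exact h (Set.ext fun x => hc x)
  rw [sepPt, dif_pos this]
  exact this.choose_spec

/-- The Engelking–Karłowicz-style independence of the full family modulo the base filter. -/
lemma base_indep : Indep (Set.univ : Set (Set Λ)) (base Λ) := by
  intro T w S _ hS
  obtain ⟨t, hts, htf, htsub⟩ := mem_generate_iff.1 hS
  -- collect the generators
  let c : Set (Idx Λ) → Λ := fun x => if h : ∃ a, reg a = x then h.choose else Classical.arbitrary Λ
  have hc : ∀ x ∈ t, reg (c x) = x := by
    intro x hx
    have h : ∃ a, reg a = x := hts hx
    simp only [c, dif_pos h]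
    exact h.choose_spec
  let u : Finset Λ := htf.toFinset.image c
  -- separating points for all pairs in T
  let s : Finset Λ := u ∪ T.sup (fun A => T.sup (fun B => {sepPt A B}))
  have hsep : ∀ A ∈ T, ∀ B ∈ T, sepPt A B ∈ s := by
    intro A hA B hB
    refine Finset.mem_union_right _ ?_
    exact Finset.le_sup (f := fun A => T.sup (fun B => ({sepPt A B} : Finset Λ))) hA
      (Finset.le_sup (f := fun B => ({sepPt A B} : Finset Λ)) hB (Finset.mem_singleton_self _))
  let proj : Set Λ → Finset {x : Λ // x ∈ s} := fun A => s.attach.filter fun x => (x : Λ) ∈ A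
  have hinj : ∀ A ∈ T, ∀ B ∈ T, proj A = proj B → A = B := by
    intro A hA B hB hAB
    by_contra hne
    have hx := sepPt_spec hne
    have hmem : sepPt A B ∈ s := hsep A hA B hB
    have : (⟨sepPt A B, hmem⟩ : {x : Λ // x ∈ s}) ∈ proj A ↔
        (⟨sepPt A B, hmem⟩ : {x : Λ // x ∈ s}) ∈ proj B := by rw [hAB]
    simp only [proj, Finset.mem_filter, Finset.mem_attach, true_and] at this
    exact hx this
  let e : Finset {x : Λ // x ∈ s} → Finset Λ := fun t' =>
    if h : ∃ A ∈ T, proj A = t' then w h.choose else ∅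
  refine ⟨⟨s, e⟩, htsub ?_, ?_⟩
  · -- membership in ⋂₀ t
    intro x hx
    rw [← hc x hx]
    show c x ∈ s
    exact Finset.mem_union_left _ (Finset.mem_image_of_mem c (htf.mem_toFinset.2 hx))
  · intro A hA
    show e (proj A) = w A
    have h : ∃ B ∈ T, proj B = proj A := ⟨A, hA, rfl⟩
    simp only [e]
    rw [dif_pos h]
    congr 1
    exact hinj _ h.choose_spec.1 _ hA h.choose_spec.2


/-- Step deciding the set `A`. -/
lemma step1 (F : Filter (Idx Λ)) (G : Set (Set Λ)) (A : Set (Idx Λ)) :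
    ∃ q : Filter (Idx Λ) × Set (Set Λ), q.1 ≤ F ∧ q.2 ⊆ G ∧ (G \ q.2).Finite ∧
      (Indep G F → Indep q.2 q.1 ∧ (A ∈ q.1 ∨ Aᶜ ∈ q.1)) := by
  by_cases hI : Indep G F
  · by_cases h : Indep G (F ⊓ 𝓟 A)
    · exact ⟨(F ⊓ 𝓟 A, G), inf_le_left, subset_rfl, by simp,
        fun _ => ⟨h, Or.inl (mem_inf_of_right (mem_principal_self A))⟩⟩
    · simp only [Indep, not_forall] at h
      obtain ⟨T, w, S, hTG, hS, hno⟩ := h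
      push_neg at hno
      rw [Filter.mem_inf_principal] at hS
      -- hS : {x | x ∈ A → x ∈ S} ∈ F
      set Y : Set (Idx Λ) := {i | ∀ B ∈ T, fn B i = w B} with hY
      refine ⟨(F ⊓ 𝓟 Y, G \ ↑T), inf_le_left, diff_subset, ?_, fun _ => ⟨?_, Or.inr ?_⟩⟩
      · exact (Set.Finite.subset T.finite_toSet (by intro x hx; simp at hx; tauto))
      · -- independence of the remaining family
        intro T₂ w₂ S₂ hT₂ hS₂
        rw [Filter.mem_inf_principal] at hS₂
        obtain ⟨i, hi, hval⟩ := hI (T ∪ T₂) (fun B => if B ∈ T then w B else w₂ B)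
          _ (by
            intro B hB
            simp only [Finset.coe_union, Set.mem_union] at hB
            rcases hB with hB | hB
            · exact hTG hB
            · exact (hT₂ hB).1) (inter_mem hS₂ hS)
        have hiY : i ∈ Y := by
          intro B hB
          have := hval B (Finset.mem_union_left _ hB)
          rwa [if_pos hB] at this
        refine ⟨i, hi.1 hiY, ?_⟩
        intro B hB
        have hBT : B ∉ T := by
          have := hT₂ (by exact_mod_cast hB)
          simpa using this.2
        have := hval B (Finset.mem_union_right _ hB)
        rwa [if_neg hBT] at this
      · -- Aᶜ belongs to the new filter
        rw [Filter.mem_inf_principal]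
        filter_upwards [hS] with i hi
        intro hiY
        by_contra hiA
        have hiS : i ∈ S := hi (not_not.1 hiA)
        obtain ⟨B, hB, hBne⟩ := hno i hiS
        exact hBne (hiY B hB)
  · exact ⟨(F, G), le_rfl, subset_rfl, by simp, fun h => absurd h hI⟩

/-- Step producing a multiplicative refinement of `f` when applicable. -/
lemma step2 (F : Filter (Idx Λ)) (G : Set (Set Λ)) (f : Finset Λ → Set (Idx Λ)) :
    ∃ q : Filter (Idx Λ) × Set (Set Λ), q.1 ≤ F ∧ q.2 ⊆ G ∧ (G \ q.2).Finite ∧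
      (Indep G F → Indep q.2 q.1) ∧
      (Indep G F → G.Nonempty → (∀ u, f u ∈ F) → (∀ u v : Finset Λ, u ⊆ v → f v ⊆ f u) →
        ∃ g : Finset Λ → Set (Idx Λ), (∀ u, g u ∈ q.1) ∧ (∀ u, g u ⊆ f u) ∧
          (∀ u v : Finset Λ, g u ∩ g v = g (u ∪ v))) := by
  by_cases hc : Indep G F ∧ G.Nonempty ∧ (∀ u, f u ∈ F) ∧ (∀ u v : Finset Λ, u ⊆ v → f v ⊆ f u)
  · obtain ⟨hI, ⟨B, hB⟩, hf, hmono⟩ := hc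
    set g : Finset Λ → Set (Idx Λ) := fun u => {i | u ⊆ fn B i ∧ i ∈ f (fn B i)} with hg
    have hganti : ∀ u v : Finset Λ, u ⊆ v → g v ⊆ g u := by
      intro u v huv i hi
      exact ⟨huv.trans hi.1, hi.2⟩
    have hmem : ∀ u, g u ∈ Filter.generate (Set.range g) := by
      intro u
      exact mem_generate_iff.2 ⟨{g u}, by simp, finite_singleton _, by simp⟩
    refine ⟨(F ⊓ Filter.generate (Set.range g), G \ {B}), inf_le_left, diff_subset,
      (Set.Finite.subset (finite_singleton B) (by intro x hx; simp at hx; tauto)),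
      fun _ => ?_, fun _ _ _ _ => ⟨g, fun u => mem_inf_of_right (hmem u), ?_, ?_⟩⟩
    · -- independence
      intro T w S hT hS
      rw [Filter.mem_inf_iff] at hS
      obtain ⟨S₁, hS₁, S₂, hS₂, rfl⟩ := hS
      obtain ⟨t, hts, htf, htsub⟩ := mem_generate_iff.1 hS₂
      -- the intersection of the basic sets contains some g v
      let uOf : Set (Idx Λ) → Finset Λ := fun x => if h : ∃ u, g u = x then h.choose else ∅
      let v : Finset Λ := htf.toFinset.sup uOf
      have hgv : g v ⊆ ⋂₀ t := by
        intro i hi x hx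
        have hx' : ∃ u, g u = x := hts hx
        have : g (uOf x) = x := by simp only [uOf, dif_pos hx']; exact hx'.choose_spec
        rw [← this]
        exact hganti _ _ (Finset.le_sup (htf.mem_toFinset.2 hx)) hi
      have hBT : B ∉ T := fun hBT => by simpa using (hT hBT).2
      obtain ⟨i, hi, hval⟩ := hI (insert B T) (fun A => if A = B then v else w A)
        (S₁ ∩ f v) (by
          intro A hA
          simp only [Finset.coe_insert, Set.mem_insert_iff] at hA
          rcases hA with rfl | hA
          · exact hB
          · exact (hT hA).1) (inter_mem hS₁ (hf v))
      have hfnB : fn B i = v := by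
        have := hval B (Finset.mem_insert_self _ _)
        rwa [if_pos rfl] at this
      have higv : i ∈ g v := ⟨by rw [hfnB], by rw [hfnB]; exact hi.2⟩
      refine ⟨i, ⟨hi.1, htsub (hgv higv)⟩, ?_⟩
      intro A hA
      have hAB : A ≠ B := fun h => hBT (h ▸ hA)
      have := hval A (Finset.mem_insert_of_mem hA)
      rwa [if_neg hAB] at this
    · intro u i hi
      exact hmono u (fn B i) hi.1 hi.2
    · intro u v
      ext i
      simp only [hg, Set.mem_inter_iff, Set.mem_setOf_eq, Finset.union_subset_iff]
      tauto
  · refine ⟨(F, G), le_rfl, subset_rfl, by simp, fun h => h, fun h1 h2 h3 h4 => ?_⟩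
    exact absurd ⟨h1, h2, h3, h4⟩ hc

/-- One full step, handling the task `t = (A, f)`. -/
noncomputable def doStep (t : Set (Idx Λ) × (Finset Λ → Set (Idx Λ)))
    (p : Filter (Idx Λ) × Set (Set Λ)) : Filter (Idx Λ) × Set (Set Λ) :=
  Classical.choose (step2 (Classical.choose (step1 p.1 p.2 t.1)).1
    (Classical.choose (step1 p.1 p.2 t.1)).2 t.2)

lemma doStep_le (t) (p : Filter (Idx Λ) × Set (Set Λ)) :
    (doStep t p).1 ≤ p.1 ∧ (doStep t p).2 ⊆ p.2 := by
  obtain ⟨h1, h2, _, _⟩ := Classical.choose_spec (step1 p.1 p.2 t.1)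
  obtain ⟨h1', h2', _, _, _⟩ := Classical.choose_spec (step2 (Classical.choose (step1 p.1 p.2 t.1)).1
    (Classical.choose (step1 p.1 p.2 t.1)).2 t.2)
  exact ⟨h1'.trans h1, h2'.trans h2⟩

lemma doStep_indep (t) (p : Filter (Idx Λ) × Set (Set Λ)) (h : Indep p.2 p.1) :
    Indep (doStep t p).2 (doStep t p).1 := by
  obtain ⟨h1, h2, _, h4⟩ := Classical.choose_spec (step1 p.1 p.2 t.1)
  obtain ⟨_, _, _, h4', _⟩ := Classical.choose_spec (step2 (Classical.choose (step1 p.1 p.2 t.1)).1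
    (Classical.choose (step1 p.1 p.2 t.1)).2 t.2)
  exact h4' (h4 h).1

lemma doStep_decides (t : Set (Idx Λ) × (Finset Λ → Set (Idx Λ)))
    (p : Filter (Idx Λ) × Set (Set Λ)) (h : Indep p.2 p.1) :
    t.1 ∈ (doStep t p).1 ∨ t.1ᶜ ∈ (doStep t p).1 := by
  obtain ⟨h1, h2, _, h4⟩ := Classical.choose_spec (step1 p.1 p.2 t.1)
  obtain ⟨h1', _, _, _, _⟩ := Classical.choose_spec (step2 (Classical.choose (step1 p.1 p.2 t.1)).1
    (Classical.choose (step1 p.1 p.2 t.1)).2 t.2)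
  rcases (h4 h).2 with hA | hA
  · exact Or.inl (h1' hA)
  · exact Or.inr (h1' hA)

lemma doStep_compl_finite (t) (p : Filter (Idx Λ) × Set (Set Λ)) :
    (p.2 \ (doStep t p).2).Finite := by
  obtain ⟨h1, h2, h3, _⟩ := Classical.choose_spec (step1 p.1 p.2 t.1)
  obtain ⟨_, h2', h3', _, _⟩ := Classical.choose_spec (step2 (Classical.choose (step1 p.1 p.2 t.1)).1
    (Classical.choose (step1 p.1 p.2 t.1)).2 t.2)
  refine Set.Finite.subset (h3.union h3') ?_
  intro x hx
  by_cases hxq : x ∈ (Classical.choose (step1 p.1 p.2 t.1)).2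
  · exact Or.inr ⟨hxq, hx.2⟩
  · exact Or.inl ⟨hx.1, hxq⟩

lemma doStep_good (t : Set (Idx Λ) × (Finset Λ → Set (Idx Λ)))
    (p : Filter (Idx Λ) × Set (Set Λ)) (h : Indep p.2 p.1)
    (hne : (doStep t p).2.Nonempty)
    (hf : ∀ u, t.2 u ∈ p.1) (hmono : ∀ u v : Finset Λ, u ⊆ v → t.2 v ⊆ t.2 u) :
    ∃ g : Finset Λ → Set (Idx Λ), (∀ u, g u ∈ (doStep t p).1) ∧ (∀ u, g u ⊆ t.2 u) ∧
      (∀ u v : Finset Λ, g u ∩ g v = g (u ∪ v)) := by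
  obtain ⟨h1, h2, _, h4⟩ := Classical.choose_spec (step1 p.1 p.2 t.1)
  obtain ⟨_, h2', _, _, h5'⟩ := Classical.choose_spec (step2 (Classical.choose (step1 p.1 p.2 t.1)).1
    (Classical.choose (step1 p.1 p.2 t.1)).2 t.2)
  exact h5' (h4 h).1 ⟨hne.choose, h2' hne.choose_spec⟩ (fun u => h1 (hf u)) hmono


section Rec
variable (task : Ordinal.{u} → Set (Idx Λ) × (Finset Λ → Set (Idx Λ)))

/-- The transfinite construction. -/
noncomputable def st (α : Ordinal.{u}) : Filter (Idx Λ) × Set (Set Λ) :=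
  doStep (task α)
    (base Λ ⊓ ⨅ β : Set.Iio α, (st β.1).1, ⋂ β : Set.Iio α, (st β.1).2)
termination_by α
decreasing_by all_goals exact β.2

/-- The "limit" stage before step `α` is performed. -/
noncomputable def prev (α : Ordinal.{u}) : Filter (Idx Λ) × Set (Set Λ) :=
  (base Λ ⊓ ⨅ β : Set.Iio α, (st task β.1).1, ⋂ β : Set.Iio α, (st task β.1).2)

lemma st_eq (α : Ordinal.{u}) : st task α = doStep (task α) (prev task α) := by
  rw [st]; rfl

lemma st_le_prev (α) : (st task α).1 ≤ (prev task α).1 ∧ (st task α).2 ⊆ (prev task α).2 := by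
  rw [st_eq]; exact doStep_le _ _

lemma prev_le {β α : Ordinal.{u}} (h : β < α) : (prev task α).1 ≤ (st task β).1 :=
  inf_le_right.trans (iInf_le _ (⟨β, h⟩ : Set.Iio α))

lemma prev_subset {β α : Ordinal.{u}} (h : β < α) : (prev task α).2 ⊆ (st task β).2 :=
  Set.iInter_subset _ (⟨β, h⟩ : Set.Iio α)

lemma prev_le_base (α) : (prev task α).1 ≤ base Λ := inf_le_left

lemma st_le_base (α) : (st task α).1 ≤ base Λ :=
  (st_le_prev task α).1.trans (prev_le_base task α)

lemma st_anti {β α : Ordinal.{u}} (h : β ≤ α) : (st task α).1 ≤ (st task β).1 := by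
  rcases eq_or_lt_of_le h with rfl | h
  · exact le_rfl
  · exact (st_le_prev task α).1.trans (prev_le task h)

lemma st_anti2 {β α : Ordinal.{u}} (h : β ≤ α) : (st task α).2 ⊆ (st task β).2 := by
  rcases eq_or_lt_of_le h with rfl | h
  · exact subset_rfl
  · exact (st_le_prev task α).2.trans (prev_subset task h)

lemma mem_prev {α : Ordinal.{u}} (hα : α ≠ 0) {S : Set (Idx Λ)} (hS : S ∈ (prev task α).1) :
    ∃ β < α, S ∈ (st task β).1 := by
  have hne : Nonempty (Set.Iio α) := ⟨⟨0, pos_iff_ne_zero.2 hα⟩⟩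
  have hdir : Directed (· ≥ ·) (fun β : Set.Iio α => (st task β.1).1) := by
    intro β γ
    rcases le_total β.1 γ.1 with h | h
    · exact ⟨γ, st_anti task h, le_rfl⟩
    · exact ⟨β, le_rfl, st_anti task h⟩
  simp only [prev] at hS
  rw [Filter.mem_inf_iff] at hS
  obtain ⟨s, hs, r, hr, rfl⟩ := hS
  rw [Filter.mem_iInf_of_directed hdir] at hr
  obtain ⟨β, hβ⟩ := hr
  exact ⟨β.1, β.2, inter_mem (st_le_base task β.1 hs) hβ⟩

lemma indep_prev (α : Ordinal.{u}) (IH : ∀ β < α, Indep (st task β).2 (st task β).1) :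
    Indep (prev task α).2 (prev task α).1 := by
  rcases eq_or_ne α 0 with rfl | hα
  · intro T w S hT hS
    have hempty : IsEmpty (Set.Iio (0 : Ordinal.{u})) :=
      ⟨fun β => (not_lt.2 zero_le (show β.1 < 0 from β.2))⟩
    have : (prev task (0 : Ordinal.{u})).1 = base Λ := by
      show base Λ ⊓ _ = base Λ
      rw [iInf_of_empty]
      exact inf_top_eq _
    rw [this] at hS
    exact base_indep T w S (Set.subset_univ _) hS
  · intro T w S hT hS
    obtain ⟨β, hβ, hSβ⟩ := mem_prev task hα hS
    exact IH β hβ T w S (hT.trans (prev_subset task hβ)) hSβ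

lemma st_indep (α : Ordinal.{u}) : Indep (st task α).2 (st task α).1 := by
  induction α using Ordinal.induction with
  | _ α IH =>
    rw [st_eq]
    exact doStep_indep _ _ (indep_prev task α IH)

lemma st_decides (α : Ordinal.{u}) :
    (task α).1 ∈ (st task α).1 ∨ ((task α).1)ᶜ ∈ (st task α).1 := by
  rw [st_eq]
  exact doStep_decides _ _ (indep_prev task α (fun β _ => st_indep task β))

lemma st_good (α : Ordinal.{u}) (hne : (st task α).2.Nonempty)
    (hf : ∀ u, (task α).2 u ∈ (prev task α).1)
    (hmono : ∀ u v : Finset Λ, u ⊆ v → (task α).2 v ⊆ (task α).2 u) :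
    ∃ g : Finset Λ → Set (Idx Λ), (∀ u, g u ∈ (st task α).1) ∧ (∀ u, g u ⊆ (task α).2 u) ∧
      (∀ u v : Finset Λ, g u ∩ g v = g (u ∪ v)) := by
  rw [st_eq] at hne ⊢
  exact doStep_good _ _ (indep_prev task α (fun β _ => st_indep task β)) hne hf hmono

/-- Cardinality bound on the removed part of the independent family. -/
lemma st_compl_card (α : Ordinal.{u}) :
    #(((st task α).2ᶜ : Set (Set Λ))) ≤ max α.card ℵ₀ := by
  induction α using Ordinal.induction with
  | _ α IH =>
    have hsub : ((st task α).2ᶜ : Set (Set Λ)) ⊆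
        ((prev task α).2ᶜ) ∪ ((prev task α).2 \ (st task α).2) := by
      intro x hx
      by_cases hp : x ∈ (prev task α).2
      · exact Or.inr ⟨hp, hx⟩
      · exact Or.inl hp
    have hfin : #((prev task α).2 \ (st task α).2 : Set (Set Λ)) ≤ ℵ₀ := by
      have : ((prev task α).2 \ (st task α).2).Finite := by
        have := doStep_compl_finite (task α) (prev task α)
        rwa [← st_eq] at this
      exact this.lt_aleph0.le
    have hprevc : #((prev task α).2ᶜ : Set (Set Λ)) ≤ max α.card ℵ₀ := by
      rcases eq_or_ne α 0 with rfl | hα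
      · have : (prev task (0 : Ordinal.{u})).2 = Set.univ := by
          show ⋂ β : Set.Iio (0 : Ordinal.{u}), _ = _
          have hempty : IsEmpty (Set.Iio (0 : Ordinal.{u})) :=
            ⟨fun β => (not_lt.2 zero_le (show β.1 < 0 from β.2))⟩
          exact Set.iInter_of_empty _
        rw [this, Set.compl_univ]
        simp
      · -- reindex the union by `α.toType`
        have hne : Nonempty α.ToType := Ordinal.nonempty_toType_iff.2 hα
        let j : α.ToType → Ordinal.{u} := fun x => ((Ordinal.ToType.mk (o := α)).symm x).1
        have hj : ∀ x, j x < α := fun x => ((Ordinal.ToType.mk (o := α)).symm x).2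
        have hU : ((prev task α).2ᶜ : Set (Set Λ)) = ⋃ x : α.ToType, ((st task (j x)).2ᶜ) := by
          show (⋂ β : Set.Iio α, (st task β.1).2)ᶜ = _
          rw [Set.compl_iInter]
          apply Set.Subset.antisymm
          · intro y hy
            obtain ⟨β, hβ⟩ := Set.mem_iUnion.1 hy
            refine Set.mem_iUnion.2 ⟨Ordinal.ToType.mk (o := α) β, ?_⟩
            have : j (Ordinal.ToType.mk (o := α) β) = β.1 := by
              simp only [j, OrderIso.symm_apply_apply]
            rw [this]
            exact hβ
          · intro y hy
            obtain ⟨x, hx⟩ := Set.mem_iUnion.1 hy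
            exact Set.mem_iUnion.2 ⟨⟨j x, hj x⟩, hx⟩
        rw [hU]
        calc #(⋃ x : α.ToType, ((st task (j x)).2ᶜ : Set (Set Λ)))
            ≤ #α.ToType * ⨆ x : α.ToType, #((st task (j x)).2ᶜ : Set (Set Λ)) :=
              Cardinal.mk_iUnion_le _
          _ ≤ α.card * max α.card ℵ₀ := by
              apply mul_le_mul'
              · rw [Cardinal.mk_toType]
              · exact ciSup_le' fun x => (IH (j x) (hj x)).trans
                  (max_le_max (Ordinal.card_le_card (hj x).le) le_rfl)
          _ ≤ max α.card ℵ₀ * max α.card ℵ₀ :=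
              mul_le_mul' (le_max_left _ _) le_rfl
          _ = max α.card ℵ₀ := Cardinal.mul_eq_self (le_max_right _ _)
    calc #(((st task α).2ᶜ : Set (Set Λ)))
        ≤ #(((prev task α).2ᶜ ∪ ((prev task α).2 \ (st task α).2) : Set (Set Λ))) :=
          Cardinal.mk_le_mk_of_subset hsub
      _ ≤ #((prev task α).2ᶜ : Set (Set Λ)) + #((prev task α).2 \ (st task α).2 : Set (Set Λ)) :=
          Cardinal.mk_union_le _ _
      _ ≤ max α.card ℵ₀ + ℵ₀ := add_le_add hprevc hfin
      _ ≤ max α.card ℵ₀ + max α.card ℵ₀ := add_le_add le_rfl (le_max_right _ _)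
      _ = max α.card ℵ₀ := Cardinal.add_eq_self (le_max_right _ _)

end Rec

lemma mk_idx (Λ : Type u) [Infinite Λ] : #(Idx Λ) = #Λ := by
  have hμ : #(Finset Λ) = #Λ := Cardinal.mk_finset_of_infinite Λ
  have h1 : ∀ s : Finset Λ, #(Finset {x : Λ // x ∈ s} → Finset Λ) = #Λ := by
    intro s
    rw [Cardinal.mk_arrow, Cardinal.lift_id, Cardinal.lift_id, hμ,
      Cardinal.mk_fintype (Finset {x : Λ // x ∈ s}), Cardinal.power_natCast]
    exact Cardinal.power_nat_eq (Cardinal.aleph0_le_mk Λ) Fintype.card_pos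
  rw [show (Idx Λ) = (Σ s : Finset Λ, (Finset {x : Λ // x ∈ s} → Finset Λ)) from rfl,
    Cardinal.mk_sigma]
  calc (Cardinal.sum fun s : Finset Λ => #(Finset {x : Λ // x ∈ s} → Finset Λ))
      = Cardinal.sum (fun _ : Finset Λ => #Λ) := by
        congr 1; funext s; exact h1 s
    _ = #(Finset Λ) * #Λ := Cardinal.sum_const' _ _
    _ = #Λ := by rw [hμ]; exact Cardinal.mul_eq_self (Cardinal.aleph0_le_mk Λ)

variable (Λ) in
/-- The type of tasks: a subset of `Idx Λ` to be decided, and a function to be refined. -/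
abbrev Tasks : Type u := Set (Idx Λ) × (Finset Λ → Set (Idx Λ))

variable (Λ) in
/-- The length of the construction: `(2 ^ λ).ord`. -/
noncomputable def kap : Ordinal.{u} := ((2 : Cardinal.{u}) ^ #Λ).ord

lemma mk_tasks (Λ : Type u) [Infinite Λ] : #(Tasks Λ) = (2 : Cardinal.{u}) ^ #Λ := by
  have hidx := mk_idx Λ
  have hμ : ℵ₀ ≤ #Λ := Cardinal.aleph0_le_mk Λ
  have hset : #(Set (Idx Λ)) = (2 : Cardinal.{u}) ^ #Λ := by rw [Cardinal.mk_set, hidx]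
  have harrow : #(Finset Λ → Set (Idx Λ)) = (2 : Cardinal.{u}) ^ #Λ := by
    rw [Cardinal.mk_arrow, Cardinal.lift_id, Cardinal.lift_id, hset,
      Cardinal.mk_finset_of_infinite, ← Cardinal.power_mul, Cardinal.mul_eq_self hμ]
  rw [Cardinal.mk_prod, Cardinal.lift_id, Cardinal.lift_id, hset, harrow,
    ← Cardinal.power_add, Cardinal.add_eq_self hμ]


lemma aleph0_le_c (Λ : Type u) [Infinite Λ] : ℵ₀ ≤ (2 : Cardinal.{u}) ^ #Λ :=
  (Cardinal.aleph0_le_mk Λ).trans (Cardinal.cantor _).le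

lemma card_kap (Λ : Type u) : (kap Λ).card = (2 : Cardinal.{u}) ^ #Λ :=
  Cardinal.card_ord _

lemma kap_ne_zero (Λ : Type u) [Infinite Λ] : kap Λ ≠ 0 :=
  by have := (Cardinal.isSuccLimit_ord (aleph0_le_c Λ)).ne_bot; rwa [Ordinal.bot_eq_zero] at this

variable (Λ) in
noncomputable def taskEquiv : (kap Λ).ToType ≃ (Tasks Λ × (kap Λ).ToType) := by
  apply Classical.choice
  apply Cardinal.eq.1
  rw [Cardinal.mk_prod, Cardinal.lift_id, Cardinal.lift_id, Cardinal.mk_toType, mk_tasks,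
    card_kap, Cardinal.mul_eq_self (aleph0_le_c Λ)]

variable (Λ) in
noncomputable def task (α : Ordinal.{u}) : Tasks Λ :=
  if h : α < kap Λ then (taskEquiv Λ ((Ordinal.ToType.mk (o := kap Λ)) ⟨α, h⟩)).1
  else (∅, fun _ => ∅)

lemma task_cofinal (t : Tasks Λ) {β : Ordinal.{u}} (hβ : β < kap Λ) :
    ∃ α, β ≤ α ∧ α < kap Λ ∧ task Λ α = t := by
  set i := Ordinal.ToType.mk (o := kap Λ)
  let ψ : (kap Λ).ToType → Ordinal.{u} := fun x => (i.symm ((taskEquiv Λ).symm (t, x))).1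
  have hψlt : ∀ x, ψ x < kap Λ := fun x => (i.symm ((taskEquiv Λ).symm (t, x))).2
  have hψtask : ∀ x, task Λ (ψ x) = t := by
    intro x
    rw [task, dif_pos (hψlt x)]
    have : i ⟨ψ x, hψlt x⟩ = (taskEquiv Λ).symm (t, x) := by
      have : (⟨ψ x, hψlt x⟩ : Set.Iio (kap Λ)) = i.symm ((taskEquiv Λ).symm (t, x)) :=
        Subtype.ext rfl
      rw [this, OrderIso.apply_symm_apply]
    rw [this, Equiv.apply_symm_apply]
  have hψinj : Function.Injective ψ := by
    intro x y hxy
    have : i.symm ((taskEquiv Λ).symm (t, x)) = i.symm ((taskEquiv Λ).symm (t, y)) :=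
      Subtype.ext hxy
    have := i.symm.injective this
    have := (taskEquiv Λ).symm.injective this
    exact (Prod.ext_iff.1 this).2
  by_contra hcon
  push_neg at hcon
  have hlt : ∀ x, ψ x < β := by
    intro x
    by_contra hge
    push_neg at hge
    exact absurd (hψtask x) (hcon (ψ x) hge (hψlt x)).elim
  -- embed `toType` into `Iio β`, contradiction with cardinalities
  have hemb : Cardinal.lift.{u + 1} #((kap Λ).ToType) ≤ Cardinal.lift.{u} #(Set.Iio β) := by
    refine Cardinal.lift_mk_le'.2 ⟨⟨fun x => ⟨ψ x, hlt x⟩, ?_⟩⟩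
    intro x y hxy
    have h2 : ψ x = ψ y := congrArg (Subtype.val : Set.Iio β → Ordinal.{u}) hxy
    exact hψinj h2
  rw [Ordinal.mk_Iio_ordinal, Cardinal.lift_lift, Cardinal.mk_toType, card_kap] at hemb
  have : (2 : Cardinal.{u}) ^ #Λ ≤ β.card := Cardinal.lift_le.1 hemb
  exact absurd (Cardinal.lt_ord.1 hβ) (not_lt.2 this)

/-- Cofinality: a `Finset Λ`-indexed family of ordinals below `kap Λ` is bounded. -/
lemma bdd_of_small {f : Finset Λ → Ordinal.{u}} (hf : ∀ u, f u < kap Λ) :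
    ∃ γ, γ < kap Λ ∧ ∀ u, f u < γ := by
  have hcof : #(Finset Λ) < (kap Λ).cof := by
    rw [Cardinal.mk_finset_of_infinite]
    by_contra hle
    push_neg at hle
    have h1 := Cardinal.lt_power_cof (c := (2 : Cardinal.{u}) ^ #Λ) (aleph0_le_c Λ)
    have h2 : ((2 : Cardinal.{u}) ^ #Λ) ^ ((kap Λ).cof) ≤ (2 : Cardinal.{u}) ^ #Λ := by
      calc ((2 : Cardinal.{u}) ^ #Λ) ^ ((kap Λ).cof) ≤ ((2 : Cardinal.{u}) ^ #Λ) ^ #Λ :=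
            Cardinal.power_le_power_left (Cardinal.power_ne_zero _ two_ne_zero) hle
        _ = (2 : Cardinal.{u}) ^ (#Λ * #Λ) := (Cardinal.power_mul).symm
        _ = (2 : Cardinal.{u}) ^ #Λ := by rw [Cardinal.mul_eq_self (Cardinal.aleph0_le_mk Λ)]
    exact absurd (h1.trans_le h2) (lt_irrefl _)
  have hsup : iSup f < kap Λ := Ordinal.iSup_lt_ord hcof hf
  refine ⟨Order.succ (iSup f), (Cardinal.isSuccLimit_ord (aleph0_le_c Λ)).succ_lt hsup,
    fun u => Order.lt_succ_iff.2 (Ordinal.le_iSup f u)⟩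



variable (Λ) in
/-- The final filter: the limit of the whole construction. -/
noncomputable def finalF : Filter (Idx Λ) := (prev (task Λ) (kap Λ)).1

lemma finalF_le_st {α : Ordinal.{u}} (h : α < kap Λ) : finalF Λ ≤ (st (task Λ) α).1 :=
  prev_le (task Λ) h

lemma finalF_indep : Indep (prev (task Λ) (kap Λ)).2 (finalF Λ) :=
  indep_prev (task Λ) (kap Λ) (fun β _ => st_indep (task Λ) β)

lemma finalF_neBot : (finalF Λ).NeBot := by
  rw [← Filter.forall_mem_nonempty_iff_neBot]
  intro S hS
  obtain ⟨i, hi, -⟩ := finalF_indep (∅ : Finset (Set Λ)) (fun _ => ∅) S (by simp) hS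
  exact ⟨i, hi⟩

lemma finalF_ultra (A : Set (Idx Λ)) : A ∈ finalF Λ ∨ Aᶜ ∈ finalF Λ := by
  obtain ⟨α, -, hα, htask⟩ := task_cofinal (t := (A, fun _ => (∅ : Set (Idx Λ))))
    (β := 0) (pos_iff_ne_zero.2 (kap_ne_zero Λ))
  have hdec := st_decides (task Λ) α
  rw [htask] at hdec
  rcases hdec with h | h
  · exact Or.inl (finalF_le_st hα h)
  · exact Or.inr (finalF_le_st hα h)

variable (Λ) in
/-- The final ultrafilter. -/
noncomputable def finalU : Ultrafilter (Idx Λ) :=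
  Ultrafilter.ofComplNotMemIff (finalF Λ) (by
    intro s
    constructor
    · intro h
      rcases finalF_ultra s with h' | h'
      · exact h'
      · exact absurd h' h
    · intro hs hsc
      haveI := finalF_neBot (Λ := Λ)
      have := Filter.inter_mem hs hsc
      rw [Set.inter_compl_self] at this
      exact Filter.empty_notMem _ this)

lemma finalF_good (f : Finset Λ → Set (Idx Λ)) (hf : ∀ u, f u ∈ finalF Λ)
    (hmono : ∀ u v : Finset Λ, u ⊆ v → f v ⊆ f u) :
    ∃ g : Finset Λ → Set (Idx Λ), (∀ u, g u ∈ finalF Λ) ∧ (∀ u, g u ⊆ f u) ∧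
      (∀ u v : Finset Λ, g u ∩ g v = g (u ∪ v)) := by
  have hmem : ∀ u, ∃ β < kap Λ, f u ∈ (st (task Λ) β).1 := fun u =>
    mem_prev (task Λ) (kap_ne_zero Λ) (hf u)
  choose β hβ hfβ using hmem
  obtain ⟨γ, hγ, hβγ⟩ := bdd_of_small hβ
  obtain ⟨α, hγα, hα, htask⟩ := task_cofinal (t := (Set.univ, f)) hγ
  have hfprev : ∀ u, (task Λ α).2 u ∈ (prev (task Λ) α).1 := by
    intro u
    rw [htask]
    exact prev_le (task Λ) ((hβγ u).trans_le hγα) (hfβ u)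
  have hne : (st (task Λ) α).2.Nonempty := by
    rw [Set.nonempty_iff_ne_empty]
    intro hemp
    have hcard := st_compl_card (task Λ) α
    rw [hemp, Set.compl_empty, Cardinal.mk_univ, Cardinal.mk_set] at hcard
    have hαc : α.card < (2 : Cardinal.{u}) ^ #Λ :=
      Cardinal.lt_ord.1 (show α < ((2 : Cardinal.{u}) ^ #Λ).ord from hα)
    have haleph : ℵ₀ < (2 : Cardinal.{u}) ^ #Λ :=
      (Cardinal.aleph0_le_mk Λ).trans_lt (Cardinal.cantor _)
    exact absurd hcard (not_le.2 (max_lt hαc haleph))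
  obtain ⟨g, hg1, hg2, hg3⟩ := st_good (task Λ) α hne hfprev (by rw [htask]; exact hmono)
  refine ⟨g, fun u => finalF_le_st hα (hg1 u), fun u => ?_, hg3⟩
  have h2 := hg2 u
  rw [htask] at h2
  exact h2

end KunenGood

/-- (Keisler under GCH; Kunen in ZFC) For every infinite cardinal `λ` (realized as an
infinite type `Λ`) there exists an ultrafilter `D` on a set `I` with `|I| = λ` which is
both regular (there is a family `{X_α : α < λ} ⊆ D` every infinite subfamily of which
has empty intersection) and good (every monotone `f : [λ]^{<ℵ₀} → D` has a
multiplicative refinement `g : [λ]^{<ℵ₀} → D` with `g u ⊆ f u` and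
`g u ∩ g v = g (u ∪ v)`). -/
theorem exists_good_regular_ultrafilter (Λ : Type u) [Infinite Λ] :
    ∃ (I : Type u) (D : Ultrafilter I),
      Cardinal.mk I = Cardinal.mk Λ ∧
      (∃ X : Λ → Set I, (∀ a : Λ, X a ∈ D) ∧
        ∀ σ : Set Λ, σ.Infinite → ⋂ a ∈ σ, X a = ∅) ∧
      (∀ f : Finset Λ → Set I, (∀ u, f u ∈ D) → (∀ u v : Finset Λ, u ⊆ v → f v ⊆ f u) →
        ∃ g : Finset Λ → Set I,
          (∀ u, g u ∈ D) ∧ (∀ u, g u ⊆ f u) ∧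
          ∀ u v : Finset Λ, g u ∩ g v = g (u ∪ v)) := by

  refine ⟨KunenGood.Idx Λ, KunenGood.finalU Λ, KunenGood.mk_idx Λ, ⟨KunenGood.reg, ?_, ?_⟩, ?_⟩
  · intro a
    exact KunenGood.prev_le_base _ _ (KunenGood.reg_mem_base a)
  · intro σ hσ
    rw [Set.eq_empty_iff_forall_notMem]
    intro i hi
    have hsub : σ ⊆ ↑i.1 := by
      intro a ha
      exact Set.mem_iInter₂.1 hi a ha
    exact absurd (Set.Finite.subset i.1.finite_toSet hsub) hσ
  · intro f hf hmono
    exact KunenGood.finalF_good f hf hmono
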